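/- Let m ≤ n, μ a Borel probability measure on ℝᵐ, and ν a Borel probability measure on ℝⁿ. Then the projection total variation distance equals the embedding total variation distance: inf_{β ∈ Φ⁻(ν,m)} d_TV(μ, β) = inf_{α ∈ Φ⁺(μ,n)} d_TV(α, ν). -/

import Mathlib

open MeasureTheory ENNReal

noncomputable section

/-- The affine map `x ↦ Vx + b` from `ℝⁿ` to `ℝᵐ` (Euclidean spaces). -/
def phiAff {m n : ℕ} (V : Matrix (Fin m) (Fin n) ℝ)
    (b : EuclideanSpace ℝ (Fin m)) (x : EuclideanSpace ℝ (Fin n)) :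
    EuclideanSpace ℝ (Fin m) :=
  (EuclideanSpace.equiv (Fin m) ℝ).symm
    (V.mulVec (EuclideanSpace.equiv (Fin n) ℝ x) + (EuclideanSpace.equiv (Fin m) ℝ) b)

/-- The `p`-Wasserstein distance: infimum over couplings of
`(∫ ‖x − y‖^p dγ)^{1/p}` (Euclidean norm). -/
def wassersteinDist (p : ℝ) {k : ℕ}
    (μ ν : Measure (EuclideanSpace ℝ (Fin k))) : ℝ :=
  sInf {r : ℝ | ∃ γ : Measure (EuclideanSpace ℝ (Fin k) × EuclideanSpace ℝ (Fin k)),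
    γ.map Prod.fst = μ ∧ γ.map Prod.snd = ν ∧
    r = (∫ z, ‖z.1 - z.2‖ ^ p ∂γ) ^ (1 / p)}

/-- The `f`-divergence `D_f(μ‖ν) = ∫ f(dμ/dν) dν`. -/
def fDivergence (f : ℝ → ℝ) {k : ℕ}
    (μ ν : Measure (EuclideanSpace ℝ (Fin k))) : ℝ :=
  ∫ x, f ((μ.rnDeriv ν x).toReal) ∂ν

/-- The Kullback–Leibler divergence `∫ log(dμ/dν) dμ`. -/
def klDivergence {k : ℕ} (μ ν : Measure (EuclideanSpace ℝ (Fin k))) : ℝ :=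
  ∫ x, Real.log ((μ.rnDeriv ν x).toReal) ∂μ

/-- The mixture `(1−θ)μ + θν`. -/
def mixture (θ : ℝ) {k : ℕ} (μ ν : Measure (EuclideanSpace ℝ (Fin k))) :
    Measure (EuclideanSpace ℝ (Fin k)) :=
  ENNReal.ofReal (1 - θ) • μ + ENNReal.ofReal θ • ν

/-- The θ-weighted Jensen–Shannon divergence. -/
def jsDivergence (θ : ℝ) {k : ℕ} (μ ν : Measure (EuclideanSpace ℝ (Fin k))) : ℝ :=
  (1 / 2) * klDivergence μ (mixture θ μ ν) + (1 / 2) * klDivergence ν (mixture θ ν μ)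

/-- The total variation metric `sup_A |μ(A) − ν(A)|`. -/
def tvDist {k : ℕ} (μ ν : Measure (EuclideanSpace ℝ (Fin k))) : ℝ :=
  sSup {r : ℝ | ∃ A : Set (EuclideanSpace ℝ (Fin k)), MeasurableSet A ∧
    r = |(μ A).toReal - (ν A).toReal|}

/-- The Hellinger squared divergence `∫ (√(dμ/dν) − 1)² dν`. -/
def hellingerSq {k : ℕ} (μ ν : Measure (EuclideanSpace ℝ (Fin k))) : ℝ :=
  ∫ x, (Real.sqrt ((μ.rnDeriv ν x).toReal) - 1) ^ 2 ∂ν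

/-- `ν` has a strictly positive density w.r.t. Lebesgue measure. -/
def HasPosDensity {k : ℕ} (ν : Measure (EuclideanSpace ℝ (Fin k))) : Prop :=
  ∃ t : EuclideanSpace ℝ (Fin k) → ℝ, Measurable t ∧ (∀ x, 0 < t x) ∧
    ν = volume.withDensity fun x => ENNReal.ofReal (t x)

end


open ProbabilityTheory

noncomputable section AuxTV

local notation "E" k => EuclideanSpace ℝ (Fin k)

variable {k m n : ℕ}

theorem phiAff_cont (V : Matrix (Fin m) (Fin n) ℝ) (b : E m) :
    Continuous (phiAff V b) := by
  unfold phiAff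
  refine (EuclideanSpace.equiv (Fin m) ℝ).symm.continuous.comp ?_
  exact (continuous_const.matrix_mulVec (EuclideanSpace.equiv (Fin n) ℝ).continuous).add
    continuous_const

theorem phiAff_meas (V : Matrix (Fin m) (Fin n) ℝ) (b : E m) :
    Measurable (phiAff V b) := (phiAff_cont V b).measurable

theorem tv_bddAbove (μ ν : Measure (E k)) [IsProbabilityMeasure μ] [IsProbabilityMeasure ν] :
    BddAbove {r : ℝ | ∃ A : Set (E k), MeasurableSet A ∧
      r = |(μ A).toReal - (ν A).toReal|} := by
  refine ⟨1, fun r hr => ?_⟩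
  obtain ⟨A, hA, rfl⟩ := hr
  have h1 : (μ A).toReal ≤ 1 := by
    simpa using ENNReal.toReal_mono one_ne_top (prob_le_one (μ := μ) (s := A))
  have h2 : (ν A).toReal ≤ 1 := by
    simpa using ENNReal.toReal_mono one_ne_top (prob_le_one (μ := ν) (s := A))
  have h3 : 0 ≤ (μ A).toReal := ENNReal.toReal_nonneg
  have h4 : 0 ≤ (ν A).toReal := ENNReal.toReal_nonneg
  rw [abs_sub_le_iff]; constructor <;> linarith

theorem tvDist_nonneg (μ ν : Measure (E k)) [IsProbabilityMeasure μ] [IsProbabilityMeasure ν] :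
    0 ≤ tvDist μ ν :=
  le_csSup (tv_bddAbove μ ν) ⟨∅, MeasurableSet.empty, by simp⟩

theorem mem_le_tvDist (μ ν : Measure (E k)) [IsProbabilityMeasure μ] [IsProbabilityMeasure ν]
    {A : Set (E k)} (hA : MeasurableSet A) :
    |(μ A).toReal - (ν A).toReal| ≤ tvDist μ ν :=
  le_csSup (tv_bddAbove μ ν) ⟨A, hA, rfl⟩

/-- One-sided Hahn-decomposition bound. -/
theorem aux_onesided (μ β : Measure (E k)) [IsProbabilityMeasure μ] [IsProbabilityMeasure β]
    (f : (E k) → ℝ≥0∞) (hf : Measurable f) (h1 : ∀ y, f y ≤ 1)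
    {s : Set (E k)} (hs : MeasurableSet s)
    (hs1 : ∀ t, MeasurableSet t → t ⊆ s → β t ≤ μ t)
    (hs2 : ∀ t, MeasurableSet t → t ⊆ sᶜ → μ t ≤ β t) :
    (∫⁻ y, f y ∂μ).toReal - (∫⁻ y, f y ∂β).toReal ≤ (μ s).toReal - (β s).toReal := by
  have hrs : β.restrict s ≤ μ.restrict s := by
    refine Measure.le_iff.2 fun t ht => ?_
    rw [Measure.restrict_apply ht, Measure.restrict_apply ht]
    exact hs1 _ (ht.inter hs) Set.inter_subset_right
  have hrsc : μ.restrict sᶜ ≤ β.restrict sᶜ := by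
    refine Measure.le_iff.2 fun t ht => ?_
    rw [Measure.restrict_apply ht, Measure.restrict_apply ht]
    exact hs2 _ (ht.inter hs.compl) Set.inter_subset_right
  have A1 : ∫⁻ y in sᶜ, f y ∂μ ≤ ∫⁻ y in sᶜ, f y ∂β := lintegral_mono' hrsc le_rfl
  have A3 : ∫⁻ y in s, (1 - f y) ∂β ≤ ∫⁻ y in s, (1 - f y) ∂μ := lintegral_mono' hrs le_rfl
  have A2 : ∀ (τ : Measure (E k)), ∫⁻ y in s, f y ∂τ + ∫⁻ y in s, (1 - f y) ∂τ = τ s := by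
    intro τ
    rw [← lintegral_add_left hf]
    rw [show (fun y => f y + (1 - f y)) = fun _ => (1 : ℝ≥0∞) from
      funext fun y => add_tsub_cancel_of_le (h1 y)]
    exact setLIntegral_one s
  have E1 : ∫⁻ y, f y ∂μ + β s ≤ ∫⁻ y, f y ∂β + μ s := by
    rw [← lintegral_add_compl f hs (μ := μ), ← lintegral_add_compl f hs (μ := β),
      ← A2 μ, ← A2 β]
    calc ∫⁻ y in s, f y ∂μ + ∫⁻ y in sᶜ, f y ∂μ
        + (∫⁻ y in s, f y ∂β + ∫⁻ y in s, (1 - f y) ∂β)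
        ≤ ∫⁻ y in s, f y ∂μ + ∫⁻ y in sᶜ, f y ∂β
        + (∫⁻ y in s, f y ∂β + ∫⁻ y in s, (1 - f y) ∂μ) := by gcongr
      _ = ∫⁻ y in s, f y ∂β + ∫⁻ y in sᶜ, f y ∂β
        + (∫⁻ y in s, f y ∂μ + ∫⁻ y in s, (1 - f y) ∂μ) := by ring
  have hfin : ∀ (τ : Measure (E k)) [IsProbabilityMeasure τ], ∫⁻ y, f y ∂τ ≠ ⊤ := by
    intro τ _
    have : ∫⁻ y, f y ∂τ ≤ 1 := by
      calc ∫⁻ y, f y ∂τ ≤ ∫⁻ _, 1 ∂τ := lintegral_mono h1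
        _ = 1 := by simp
    exact (this.trans_lt one_lt_top).ne
  have E2 : ((∫⁻ y, f y ∂μ) + β s).toReal ≤ ((∫⁻ y, f y ∂β) + μ s).toReal :=
    ENNReal.toReal_mono (by simp [ENNReal.add_ne_top, hfin β, measure_ne_top]) E1
  rw [ENNReal.toReal_add (hfin μ) (measure_ne_top _ _),
    ENNReal.toReal_add (hfin β) (measure_ne_top _ _)] at E2
  linarith

/-- Core inequality: for `0 ≤ f ≤ 1`, `|∫f dμ − ∫f dβ| ≤ tvDist μ β`. -/
theorem integral_diff_le_tvDist (μ β : Measure (E k))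
    [IsProbabilityMeasure μ] [IsProbabilityMeasure β]
    (f : (E k) → ℝ≥0∞) (hf : Measurable f) (h1 : ∀ y, f y ≤ 1) :
    |(∫⁻ y, f y ∂μ).toReal - (∫⁻ y, f y ∂β).toReal| ≤ tvDist μ β := by
  obtain ⟨s, hs, hsle, hscle⟩ := hahn_decomposition (μ := μ) (ν := β)
  have e1 := aux_onesided μ β f hf h1 hs hsle hscle
  have e2 := aux_onesided β μ f hf h1 hs.compl
    (fun t ht hts => hscle t ht hts)
    (fun t ht hts => hsle t ht (by simpa using hts))
  rw [abs_sub_le_iff]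
  constructor
  · exact e1.trans ((le_abs_self _).trans (mem_le_tvDist μ β hs))
  · refine e2.trans ((le_abs_self _).trans ?_)
    have := mem_le_tvDist μ β hs.compl
    rwa [abs_sub_comm] at this

theorem tv_bind_le (μ β : Measure (E m)) [IsProbabilityMeasure μ] [IsProbabilityMeasure β]
    (κ : Kernel (E m) (E n)) [IsMarkovKernel κ] :
    tvDist (μ.bind κ) (β.bind κ) ≤ tvDist μ β := by
  refine Real.sSup_le (fun r hr => ?_) (tvDist_nonneg μ β)
  obtain ⟨A, hA, rfl⟩ := hr
  rw [Measure.bind_apply hA κ.measurable.aemeasurable, Measure.bind_apply hA κ.measurable.aemeasurable]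
  exact integral_diff_le_tvDist μ β _ (κ.measurable_coe hA) fun y => prob_le_one

theorem tv_map_le (α ν : Measure (E n)) [IsProbabilityMeasure α] [IsProbabilityMeasure ν]
    {g : (E n) → E m} (hg : Measurable g) :
    tvDist (α.map g) (ν.map g) ≤ tvDist α ν := by
  refine Real.sSup_le (fun r hr => ?_) (tvDist_nonneg α ν)
  obtain ⟨A, hA, rfl⟩ := hr
  rw [Measure.map_apply hg hA, Measure.map_apply hg hA]
  exact mem_le_tvDist α ν (hg hA)

theorem exists_V0 (hmn : m ≤ n) : ∃ V : Matrix (Fin m) (Fin n) ℝ, V * V.transpose = 1 := by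
  refine ⟨Matrix.of fun i j => if j = Fin.castLE hmn i then 1 else 0, ?_⟩
  ext i l
  simp only [Matrix.mul_apply, Matrix.transpose_apply, Matrix.of_apply, Matrix.one_apply,
    ite_mul, one_mul, zero_mul]
  rw [Finset.sum_ite_eq' Finset.univ (Fin.castLE hmn i)]
  simp [Fin.castLE_inj, eq_comm]

def psiAff (V : Matrix (Fin m) (Fin n) ℝ) (b : E m) (y : E m) : E n :=
  (EuclideanSpace.equiv (Fin n) ℝ).symm
    (V.transpose.mulVec ((EuclideanSpace.equiv (Fin m) ℝ) y - (EuclideanSpace.equiv (Fin m) ℝ) b))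

theorem psiAff_cont (V : Matrix (Fin m) (Fin n) ℝ) (b : E m) : Continuous (psiAff V b) := by
  unfold psiAff
  exact (EuclideanSpace.equiv (Fin n) ℝ).symm.continuous.comp
    (continuous_const.matrix_mulVec
      ((EuclideanSpace.equiv (Fin m) ℝ).continuous.sub continuous_const))

theorem phiAff_psiAff {V : Matrix (Fin m) (Fin n) ℝ} (hV : V * V.transpose = 1) (b : E m)
    (y : E m) : phiAff V b (psiAff V b y) = y := by
  unfold phiAff psiAff
  rw [ContinuousLinearEquiv.apply_symm_apply, Matrix.mulVec_mulVec, hV, Matrix.one_mulVec,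
    sub_add_cancel]
  exact (EuclideanSpace.equiv (Fin m) ℝ).symm_apply_apply y

theorem exists_lift (V : Matrix (Fin m) (Fin n) ℝ) (b : E m) (hV : V * V.transpose = 1)
    (μ : Measure (E m)) (ν : Measure (E n))
    [IsProbabilityMeasure μ] [IsProbabilityMeasure ν] :
    ∃ α : Measure (E n), IsProbabilityMeasure α ∧ α.map (phiAff V b) = μ ∧
      tvDist α ν ≤ tvDist μ (ν.map (phiAff V b)) := by
  classical
  set φ := phiAff V b with hφdef
  have hφ : Measurable φ := phiAff_meas V b
  have hψ : Measurable (psiAff V b) := (psiAff_cont V b).measurable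
  haveI : IsProbabilityMeasure (ν.map φ) := Measure.isProbabilityMeasure_map hφ.aemeasurable
  have hpair : Measurable fun x : E n => (φ x, x) := hφ.prodMk measurable_id
  set ρ : Measure ((E m) × (E n)) := ν.map (fun x => (φ x, x)) with hρdef
  haveI : IsProbabilityMeasure ρ := Measure.isProbabilityMeasure_map hpair.aemeasurable
  have hfst : ρ.fst = ν.map φ := Measure.fst_map_prodMk measurable_id
  set κ : Kernel (E m) (E n) := ρ.condKernel with hκdef
  have hdis : (ν.map φ) ⊗ₘ κ = ρ := by rw [← hfst]; exact ρ.disintegrate ρ.condKernel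
  have hS : MeasurableSet {p : (E m) × (E n) | φ p.2 = p.1} :=
    measurableSet_eq_fun (hφ.comp measurable_snd) measurable_fst
  have hρS : ρ {p : (E m) × (E n) | φ p.2 = p.1}ᶜ = 0 := by
    rw [hρdef, Measure.map_apply hpair hS.compl]
    convert measure_empty (μ := ν)
    ext x; simp
  have hsec : ∀ y : E m, (Prod.mk y ⁻¹' {p : (E m) × (E n) | φ p.2 = p.1}) = {x | φ x = y} :=
    fun y => rfl
  have hg : Measurable fun y => κ y {x | φ x = y} := by
    have := Kernel.measurable_kernel_prodMk_left (κ := κ) hS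
    simpa [hsec] using this
  have h0 : ∫⁻ y, κ y ({x | φ x = y}ᶜ) ∂(ν.map φ) = 0 := by
    have := Measure.compProd_apply (μ := ν.map φ) (κ := κ) hS.compl
    rw [hdis, hρS] at this
    exact this.symm
  have hae : ∀ᵐ y ∂(ν.map φ), κ y {x | φ x = y} = 1 := by
    have h0' : ∀ᵐ y ∂(ν.map φ), κ y ({x | φ x = y}ᶜ) = 0 := by
      have hm : Measurable fun y => κ y ({x | φ x = y}ᶜ) := by
        have := Kernel.measurable_kernel_prodMk_left (κ := κ) hS.compl
        simpa using this
      exact (lintegral_eq_zero_iff hm).mp h0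
    refine h0'.mono fun y hy => ?_
    have hmy : MeasurableSet {x : E n | φ x = y} := hφ (measurableSet_singleton y)
    exact (prob_compl_eq_zero_iff hmy).mp hy
  set T : Set (E m) := {y | κ y {x | φ x = y} = 1} with hTdef
  have hT : MeasurableSet T := hg (measurableSet_singleton 1)
  set κ' : Kernel (E m) (E n) :=
    Kernel.piecewise hT κ (Kernel.deterministic (psiAff V b) hψ) with hκ'def
  haveI : IsMarkovKernel κ' := by
    rw [hκ'def]; infer_instance
  have hκ'1 : ∀ (y : E m) (A : Set (E m)), MeasurableSet A →
      κ' y (φ ⁻¹' A) = A.indicator 1 y := by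
    intro y A hA
    rw [hκ'def, Kernel.piecewise_apply]
    split_ifs with hy
    · have hy1 : κ y {x | φ x = y} = 1 := hy
      by_cases hyA : y ∈ A
      · have hsub : {x : E n | φ x = y} ⊆ φ ⁻¹' A := fun x hx => by
          simp only [Set.mem_preimage]; rw [Set.mem_setOf_eq] at hx; rw [hx]; exact hyA
        have : κ y (φ ⁻¹' A) = 1 :=
          le_antisymm prob_le_one (hy1 ▸ measure_mono hsub)
        simp [this, Set.indicator_of_mem hyA]
      · have hGc : κ y ({x | φ x = y}ᶜ) = 0 :=
          (prob_compl_eq_zero_iff (hφ (measurableSet_singleton y))).mpr hy1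
        have hsub : φ ⁻¹' A ⊆ {x : E n | φ x = y}ᶜ := fun x hx h => by
          rw [Set.mem_setOf_eq] at h; rw [Set.mem_preimage, h] at hx; exact hyA hx
        have : κ y (φ ⁻¹' A) = 0 := measure_mono_null hsub hGc
        simp [this, Set.indicator_of_notMem hyA]
    · rw [Kernel.deterministic_apply, Measure.dirac_apply' _ (hφ hA)]
      have : psiAff V b y ∈ φ ⁻¹' A ↔ y ∈ A := by
        rw [Set.mem_preimage, hφdef, phiAff_psiAff hV]
      simp only [Set.indicator_apply]
      rw [if_congr this rfl rfl]
      split_ifs <;> rfl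
  have hνbind : (ν.map φ).bind κ' = ν := by
    refine Measure.ext fun A hA => ?_
    rw [Measure.bind_apply hA κ'.measurable.aemeasurable]
    have hcong : ∀ᵐ y ∂(ν.map φ), κ' y A = κ y A := by
      refine hae.mono fun y hy => ?_
      have hy' : y ∈ T := hy
      rw [hκ'def, Kernel.piecewise_apply, if_pos hy']
    rw [lintegral_congr_ae hcong]
    have hcp := Measure.compProd_apply (μ := ν.map φ) (κ := κ) (measurable_snd hA)
    rw [hdis] at hcp
    have hsec2 : ∀ y : E m, (Prod.mk y ⁻¹' (Prod.snd ⁻¹' A)) = A := fun y => rfl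
    simp only [hsec2] at hcp
    rw [← hcp, hρdef, Measure.map_apply hpair (measurable_snd hA)]
    rfl
  refine ⟨μ.bind κ', ?_, ?_, ?_⟩
  · constructor
    rw [Measure.bind_apply MeasurableSet.univ κ'.measurable.aemeasurable]
    simp [measure_univ]
  · refine Measure.ext fun A hA => ?_
    rw [Measure.map_apply hφ hA, Measure.bind_apply (hφ hA) κ'.measurable.aemeasurable]
    rw [lintegral_congr fun y => hκ'1 y A hA]
    exact lintegral_indicator_one hA
  · have h := tv_bind_le μ (ν.map φ) κ'
    rwa [hνbind] at h

end AuxTV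

theorem projection_eq_embedding_tv {m n : ℕ} (hmn : m ≤ n)
    (μ : Measure (EuclideanSpace ℝ (Fin m))) (ν : Measure (EuclideanSpace ℝ (Fin n)))
    [IsProbabilityMeasure μ] [IsProbabilityMeasure ν] :
    sInf {r : ℝ | ∃ (V : Matrix (Fin m) (Fin n) ℝ) (b : EuclideanSpace ℝ (Fin m)),
        V * V.transpose = 1 ∧ r = tvDist μ (ν.map (phiAff V b))} =
    sInf {r : ℝ | ∃ α : Measure (EuclideanSpace ℝ (Fin n)), IsProbabilityMeasure α ∧
        (∃ (V : Matrix (Fin m) (Fin n) ℝ) (b : EuclideanSpace ℝ (Fin m)),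
          V * V.transpose = 1 ∧ α.map (phiAff V b) = μ) ∧
        r = tvDist α ν} := by
  obtain ⟨V0, hV0⟩ := exists_V0 hmn
  set L := {r : ℝ | ∃ (V : Matrix (Fin m) (Fin n) ℝ) (b : EuclideanSpace ℝ (Fin m)),
      V * V.transpose = 1 ∧ r = tvDist μ (ν.map (phiAff V b))} with hLdef
  set R := {r : ℝ | ∃ α : Measure (EuclideanSpace ℝ (Fin n)), IsProbabilityMeasure α ∧
      (∃ (V : Matrix (Fin m) (Fin n) ℝ) (b : EuclideanSpace ℝ (Fin m)),
        V * V.transpose = 1 ∧ α.map (phiAff V b) = μ) ∧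
      r = tvDist α ν} with hRdef
  have hLne : L.Nonempty := ⟨tvDist μ (ν.map (phiAff V0 0)), V0, 0, hV0, rfl⟩
  have hRne : R.Nonempty := by
    obtain ⟨α, hα, hmap, _⟩ := exists_lift V0 0 hV0 μ ν
    exact ⟨tvDist α ν, α, hα, ⟨V0, 0, hV0, hmap⟩, rfl⟩
  have hLbdd : BddBelow L := by
    refine ⟨0, fun r hr => ?_⟩
    obtain ⟨V, b, hV, rfl⟩ := hr
    haveI : IsProbabilityMeasure (ν.map (phiAff V b)) :=
      Measure.isProbabilityMeasure_map (phiAff_meas V b).aemeasurable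
    exact tvDist_nonneg μ (ν.map (phiAff V b))
  have hRbdd : BddBelow R := by
    refine ⟨0, fun r hr => ?_⟩
    obtain ⟨α, hα, _, rfl⟩ := hr
    haveI := hα
    exact tvDist_nonneg α ν
  apply le_antisymm
  · refine le_csInf hRne fun r hr => ?_
    obtain ⟨α, hα, ⟨V, b, hV, hmap⟩, rfl⟩ := hr
    haveI := hα
    have h1 : tvDist μ (ν.map (phiAff V b)) ≤ tvDist α ν := by
      rw [← hmap]
      exact tv_map_le α ν (phiAff_meas V b)
    exact (csInf_le hLbdd ⟨V, b, hV, rfl⟩).trans h1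
  · refine le_csInf hLne fun r hr => ?_
    obtain ⟨V, b, hV, rfl⟩ := hr
    obtain ⟨α, hα, hmap, hle⟩ := exists_lift V b hV μ ν
    exact (csInf_le hRbdd ⟨α, hα, ⟨V, b, hV, hmap⟩, rfl⟩).trans hle
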